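/- Let f : ℝ → ℝ be differentiable on a closed interval [a₀,b₀] with f'(t) ≠ 0 for every t ∈ [a₀,b₀], and let x* ∈ [a₀,b₀] with f(x*) = 0. Suppose (Xₖ)ₖ≥0 is a sequence of subsets of ℝ with X₀ = [a₀,b₀] and, for every k, Xₖ₊₁ = N(Xₖ) ∩ Xₖ, where N(Xₖ) = { mₖ − f(mₖ)/s : s ∈ f'(Xₖ) } for some point mₖ ∈ Xₖ. Then for every k ≥ 0 one has x* ∈ Xₖ, and the sequence is nested: Xₖ₊₁ ⊆ Xₖ for every k. -/

import Mathlib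

open Set

/-- Auxiliary: positive-denominator case. -/
lemma aux_inv_pos (c u v w : ℝ) (hv : 0 < v) (h1 : v ≤ w) (h2 : w ≤ u) :
    c / w ∈ Set.uIcc (c / u) (c / v) := by
  have hw : 0 < w := lt_of_lt_of_le hv h1
  have hu : 0 < u := lt_of_lt_of_le hw h2
  rcases le_or_gt 0 c with hc | hc
  · exact Set.mem_uIcc.2 (Or.inl ⟨by gcongr, by gcongr⟩)
  · have key1 : -c / u ≤ -c / w := by gcongr <;> linarith
    have key2 : -c / w ≤ -c / v := by gcongr <;> linarith
    rw [neg_div, neg_div] at key1 key2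
    exact Set.mem_uIcc.2 (Or.inr ⟨by linarith, by linarith⟩)

/-- Auxiliary: if `v ≤ w ≤ u` with `u, v` of the same sign and `c ≠ 0`,
then `c / w` lies between `c / u` and `c / v`. -/
lemma aux_inv_between (c u v w : ℝ) (hc : c ≠ 0) (huv : 0 < u * v)
    (h1 : v ≤ w) (h2 : w ≤ u) : c / w ∈ Set.uIcc (c / u) (c / v) := by
  rcases lt_or_gt_of_ne (fun h : v = 0 => by simp [h] at huv) with hv | hv
  · have hu : u < 0 := by nlinarith
    have h := aux_inv_pos (-c) (-v) (-u) (-w) (by linarith) (by linarith) (by linarith)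
    rw [neg_div_neg_eq, neg_div_neg_eq, neg_div_neg_eq] at h
    rw [Set.uIcc_comm]
    exact h
  · exact aux_inv_pos c u v w hv h1 h2

theorem stmt_2 (f f' : ℝ → ℝ) (a₀ b₀ : ℝ) (hab : a₀ ≤ b₀)
    (hderiv : ∀ t ∈ Icc a₀ b₀, HasDerivAt f (f' t) t)
    (hne : ∀ t ∈ Icc a₀ b₀, f' t ≠ 0)
    (xstar : ℝ) (hxstar : xstar ∈ Icc a₀ b₀) (hzero : f xstar = 0)
    (X : ℕ → Set ℝ) (m : ℕ → ℝ) (hm : ∀ k, m k ∈ X k)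
    (hX0 : X 0 = Icc a₀ b₀)
    (hXsucc : ∀ k, X (k + 1) =
      {y : ℝ | ∃ s ∈ f' '' X k, y = m k - f (m k) / s} ∩ X k) :
    (∀ k, xstar ∈ X k) ∧ (∀ k, X (k + 1) ⊆ X k) := by
  -- Darboux: image of Icc a₀ b₀ under f' is ord-connected
  have hI : OrdConnected (Icc a₀ b₀) := ordConnected_Icc
  have hDarbouxI : OrdConnected (f' '' Icc a₀ b₀) :=
    hI.image_hasDerivWithinAt (fun x hx => (hderiv x hx).hasDerivWithinAt)
  -- f' has constant sign on Icc a₀ b₀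
  have hsign : ∀ t₁ ∈ Icc a₀ b₀, ∀ t₂ ∈ Icc a₀ b₀, 0 < f' t₁ * f' t₂ := by
    intro t₁ h₁ t₂ h₂
    rcases lt_or_gt_of_ne (hne t₁ h₁) with p₁ | p₁ <;>
      rcases lt_or_gt_of_ne (hne t₂ h₂) with p₂ | p₂
    · exact mul_pos_of_neg_of_neg p₁ p₂
    · exfalso
      have h0 : (0 : ℝ) ∈ f' '' Icc a₀ b₀ :=
        hDarbouxI.uIcc_subset ⟨t₁, h₁, rfl⟩ ⟨t₂, h₂, rfl⟩
          (Set.mem_uIcc.2 (Or.inl ⟨le_of_lt p₁, le_of_lt p₂⟩))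
      obtain ⟨t, ht, ht0⟩ := h0
      exact hne t ht ht0
    · exfalso
      have h0 : (0 : ℝ) ∈ f' '' Icc a₀ b₀ :=
        hDarbouxI.uIcc_subset ⟨t₁, h₁, rfl⟩ ⟨t₂, h₂, rfl⟩
          (Set.mem_uIcc.2 (Or.inr ⟨le_of_lt p₂, le_of_lt p₁⟩))
      obtain ⟨t, ht, ht0⟩ := h0
      exact hne t ht ht0
    · exact mul_pos p₁ p₂
  -- Mean value theorem helper
  have mvt : ∀ p ∈ Icc a₀ b₀, ∀ q ∈ Icc a₀ b₀, p < q →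
      ∃ c ∈ Ioo p q, f' c = (f q - f p) / (q - p) := by
    intro p hp q hq hpq
    have hsub : Icc p q ⊆ Icc a₀ b₀ := Icc_subset_Icc hp.1 hq.2
    exact exists_hasDerivAt_eq_slope f f' hpq
      (fun x hx => (hderiv x (hsub hx)).continuousAt.continuousWithinAt)
      (fun x hx => hderiv x (hsub (Ioo_subset_Icc_self hx)))
  -- main induction
  have key : ∀ k, xstar ∈ X k ∧ X k ⊆ Icc a₀ b₀ ∧ OrdConnected (X k) := by
    intro k
    induction k with
    | zero => rw [hX0]; exact ⟨hxstar, subset_rfl, hI⟩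
    | succ k ih =>
      obtain ⟨hxs, hsub, hoc⟩ := ih
      have hmX : m k ∈ X k := hm k
      have hmI : m k ∈ Icc a₀ b₀ := hsub hmX
      -- x* stays in the next iterate
      have hstar : xstar ∈ X (k + 1) := by
        rw [hXsucc k]
        refine ⟨?_, hxs⟩
        rcases eq_or_ne (m k) xstar with heq | hne'
        · -- m k = x*, so f (m k) = 0 and x* = m k - 0 / s for any s
          refine ⟨f' (m k), ⟨m k, hmX, rfl⟩, ?_⟩
          rw [heq, hzero]; simp
        · -- use MVT between x* and m k
          have : ∃ c ∈ X k, c ∈ Icc a₀ b₀ ∧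
              f' c = (f (m k)) / (m k - xstar) := by
            rcases lt_or_gt_of_ne hne' with h | h
            · obtain ⟨c, hc, hc'⟩ := mvt (m k) hmI xstar hxstar h
              refine ⟨c, hoc.out hmX hxs ⟨le_of_lt hc.1, le_of_lt hc.2⟩,
                hI.out hmI hxstar ⟨le_of_lt hc.1, le_of_lt hc.2⟩, ?_⟩
              rw [hc', hzero]
              rw [div_eq_div_iff (by linarith) (by linarith)]
              ring
            · obtain ⟨c, hc, hc'⟩ := mvt xstar hxstar (m k) hmI h
              refine ⟨c, hoc.out hxs hmX ⟨le_of_lt hc.1, le_of_lt hc.2⟩,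
                hI.out hxstar hmI ⟨le_of_lt hc.1, le_of_lt hc.2⟩, ?_⟩
              rw [hc', hzero]; ring_nf
          obtain ⟨c, hcX, hcI, hc⟩ := this
          refine ⟨f' c, ⟨c, hcX, rfl⟩, ?_⟩
          rw [hc]
          have h1 : m k - xstar ≠ 0 := sub_ne_zero.2 hne'
          have h2 : f (m k) ≠ 0 := by
            intro h0
            apply hne c hcI
            rw [hc, h0, zero_div]
          field_simp
          ring
      -- ord-connectedness of the next iterate
      have hocN : OrdConnected (X (k + 1)) := by
        rw [hXsucc k]
        refine OrdConnected.inter ?_ hoc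
        constructor
        rintro y₁ ⟨s₁, ⟨t₁, ht₁, rfl⟩, rfl⟩ y₂ ⟨s₂, ⟨t₂, ht₂, rfl⟩, rfl⟩ z hz
        rcases eq_or_ne (f (m k)) 0 with hc0 | hc0
        · -- N is the singleton {m k}
          have hz1 : z = m k := by
            simp only [hc0, zero_div, sub_zero] at hz
            exact le_antisymm hz.2 hz.1
          exact ⟨f' t₁, ⟨t₁, ht₁, rfl⟩, by simp [hz1, hc0]⟩
        · have hs₁ : f' t₁ ≠ 0 := hne t₁ (hsub ht₁)
          have hs₂ : f' t₂ ≠ 0 := hne t₂ (hsub ht₂)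
          have hss : 0 < f' t₁ * f' t₂ := hsign t₁ (hsub ht₁) t₂ (hsub ht₂)
          rw [Set.mem_Icc] at hz
          obtain ⟨hz1, hz2⟩ := hz
          have hw1 : m k - z ≤ f (m k) / f' t₁ := by linarith
          have hw2 : f (m k) / f' t₂ ≤ m k - z := by linarith
          have huv : 0 < (f (m k) / f' t₁) * (f (m k) / f' t₂) := by
            have he : (f (m k) / f' t₁) * (f (m k) / f' t₂)
                = f (m k) ^ 2 / (f' t₁ * f' t₂) := by
              field_simp
            rw [he]
            exact div_pos (by positivity) hss
          have hbetween := aux_inv_between (f (m k)) (f (m k) / f' t₁)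
            (f (m k) / f' t₂) (m k - z) hc0 huv hw2 hw1
          rw [div_div_cancel₀ hc0, div_div_cancel₀ hc0] at hbetween
          have hwne : m k - z ≠ 0 := by
            intro h0
            rw [h0] at hw1 hw2
            nlinarith
          have hDarboux : OrdConnected (f' '' X k) :=
            hoc.image_hasDerivWithinAt
              (fun x hx => (hderiv x (hsub hx)).hasDerivWithinAt)
          have hsmem : f (m k) / (m k - z) ∈ f' '' X k :=
            hDarboux.uIcc_subset ⟨t₁, ht₁, rfl⟩ ⟨t₂, ht₂, rfl⟩ hbetween
          refine ⟨f (m k) / (m k - z), hsmem, ?_⟩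
          rw [div_div_cancel₀ hc0]
          ring
      exact ⟨hstar, (hXsucc k ▸ inter_subset_right).trans hsub, hocN⟩
  refine ⟨fun k => (key k).1, fun k => ?_⟩
  rw [hXsucc k]
  exact inter_subset_right
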